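/- Let H be a group with finite symmetric generating set S whose word metric is δ-hyperbolic, let K ≥ 1, C ≥ 0, and let ψ : H → H be a group automorphism that is a (K,C)-quasi-isometry with respect to the word metric, i.e. (1/K)·d(a,b) − C ≤ d(ψ(a),ψ(b)) ≤ K·d(a,b) + C for all a,b ∈ H. Then for any κ ≥ 0 there exists κ' ≥ 0, depending only on K, C, κ, H, S and δ, such that for every h ∈ H, if h is κ-almost conjugacy minimal then ψ(h) is κ'-almost conjugacy minimal. -/

import Mathlib

open Set

/-- The word length of `h` with respect to the generating set `S`: the least `n` such
that `h` is a product of `n` elements of `S`. -/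
noncomputable def wordLength {H : Type*} [Group H] (S : Set H) (h : H) : ℕ :=
  sInf {n | ∃ l : List H, l.length = n ∧ (∀ x ∈ l, x ∈ S) ∧ l.prod = h}

/-- The word metric: `d(a,b) = |a⁻¹ b|`. -/
noncomputable def wordDist {H : Type*} [Group H] (S : Set H) (a b : H) : ℕ :=
  wordLength S (a⁻¹ * b)

/-- `g : {0,…,n} → H` is a discrete geodesic (of length `n`) in the word metric:
`d(g i, g j) = |i − j|` for all `i, j ≤ n`. -/
def IsDiscreteGeodesic {H : Type*} [Group H] (S : Set H) (g : ℕ → H) (n : ℕ) : Prop :=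
  ∀ i j : ℕ, i ≤ j → j ≤ n → wordDist S (g i) (g j) = j - i

/-- The Gromov product `(x,y)_z = ½(d(x,z) + d(y,z) − d(x,y))` in the word metric. -/
noncomputable def gromovProd {H : Type*} [Group H] (S : Set H) (x y z : H) : ℝ :=
  ((wordDist S x z : ℝ) + (wordDist S y z : ℝ) - (wordDist S x y : ℝ)) / 2

/-- The word metric of `(H,S)` is `δ`-hyperbolic: geodesic triangles in the Cayley graph
are `δ`-thin, i.e. for any `x, y, z`, any discrete geodesics `f` from `z` to `x` and `g`
from `z` to `y`, and any `i` with `i ≤ (x,y)_z`, one has `d(f i, g i) ≤ δ`. -/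
def WordHyperbolic {H : Type*} [Group H] (S : Set H) (δ : ℝ) : Prop :=
  ∀ (x y z : H) (f g : ℕ → H),
    f 0 = z → f (wordDist S z x) = x → IsDiscreteGeodesic S f (wordDist S z x) →
    g 0 = z → g (wordDist S z y) = y → IsDiscreteGeodesic S g (wordDist S z y) →
    ∀ i : ℕ, i ≤ wordDist S z x → i ≤ wordDist S z y →
      (i : ℝ) ≤ gromovProd S x y z →
      (wordDist S (f i) (g i) : ℝ) ≤ δ

/-- `h` is `κ`-almost conjugacy minimal: `|h| ≤ |h'| + κ` for every conjugate `h'` of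
`h` in `H`. -/
def AlmostConjMin {H : Type*} [Group H] (S : Set H) (κ : ℝ) (h : H) : Prop :=
  ∀ g : H, (wordLength S h : ℝ) ≤ (wordLength S (g⁻¹ * h * g) : ℝ) + κ

/-- `h` is conjugacy minimal: `|h| ≤ |h'|` for every conjugate `h'` of `h` in `H`. -/
def ConjMin {H : Type*} [Group H] (S : Set H) (h : H) : Prop :=
  ∀ g : H, wordLength S h ≤ wordLength S (g⁻¹ * h * g)

namespace Stmt9

variable {H : Type*} [Group H] {S : Set H}

/-- Generation hypothesis in convenient form. -/
def Gen (S : Set H) : Prop := ∀ h : H, ∃ l : List H, (∀ x ∈ l, x ∈ S) ∧ l.prod = h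

lemma gen_of_closure (hSsym : ∀ s ∈ S, s⁻¹ ∈ S) (hSgen : Subgroup.closure S = ⊤) :
    Gen S := by
  intro h
  have h1 : h ∈ (Subgroup.closure S).toSubmonoid := by
    rw [hSgen]; trivial
  rw [Subgroup.closure_toSubmonoid] at h1
  have h2 : S ∪ S⁻¹ = S := by
    apply Set.union_eq_self_of_subset_right
    intro x hx
    have := hSsym x⁻¹ hx
    simpa using this
  rw [h2] at h1
  exact Submonoid.exists_list_of_mem_closure h1

lemma exists_min_word (hS : Gen S) (h : H) :
    ∃ l : List H, l.length = wordLength S h ∧ (∀ x ∈ l, x ∈ S) ∧ l.prod = h := by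
  have hne : {n | ∃ l : List H, l.length = n ∧ (∀ x ∈ l, x ∈ S) ∧ l.prod = h}.Nonempty := by
    obtain ⟨l, hl, hp⟩ := hS h
    exact ⟨l.length, l, rfl, hl, hp⟩
  exact Nat.sInf_mem hne

lemma wordLength_le {h : H} (l : List H) (hl : ∀ x ∈ l, x ∈ S) (hp : l.prod = h) :
    wordLength S h ≤ l.length :=
  Nat.sInf_le ⟨l, rfl, hl, hp⟩

lemma wordLength_one : wordLength S (1 : H) = 0 :=
  Nat.le_zero.mp (wordLength_le ([] : List H) (by simp) (by simp))

lemma eq_one_of_wordLength_eq_zero (hS : Gen S) {h : H} (h0 : wordLength S h = 0) :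
    h = 1 := by
  obtain ⟨l, hlen, _, hp⟩ := exists_min_word hS h
  rw [h0] at hlen
  rw [List.length_eq_zero_iff] at hlen
  rw [hlen] at hp
  simpa using hp.symm

lemma wordLength_inv_le (hSsym : ∀ s ∈ S, s⁻¹ ∈ S) (hS : Gen S) (h : H) :
    wordLength S h⁻¹ ≤ wordLength S h := by
  obtain ⟨l, hlen, hl, hp⟩ := exists_min_word hS h
  have : ((l.map fun x => x⁻¹).reverse).prod = h⁻¹ := by
    rw [← List.prod_inv_reverse, hp]
  refine le_trans (wordLength_le _ ?_ this) ?_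
  · intro x hx
    simp only [List.mem_reverse, List.mem_map] at hx
    obtain ⟨y, hy, rfl⟩ := hx
    exact hSsym y (hl y hy)
  · simp [hlen]

lemma wordLength_inv (hSsym : ∀ s ∈ S, s⁻¹ ∈ S) (hS : Gen S) (h : H) :
    wordLength S h⁻¹ = wordLength S h := by
  refine le_antisymm (wordLength_inv_le hSsym hS h) ?_
  have := wordLength_inv_le hSsym hS h⁻¹
  simpa using this

lemma wordLength_mul_le (hS : Gen S) (a b : H) :
    wordLength S (a * b) ≤ wordLength S a + wordLength S b := by
  obtain ⟨la, hla, hl1, hp1⟩ := exists_min_word hS a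
  obtain ⟨lb, hlb, hl2, hp2⟩ := exists_min_word hS b
  have : (la ++ lb).prod = a * b := by rw [List.prod_append, hp1, hp2]
  refine le_trans (wordLength_le _ ?_ this) ?_
  · intro x hx
    rcases List.mem_append.mp hx with h | h
    exacts [hl1 x h, hl2 x h]
  · simp [hla, hlb]

lemma wordDist_self (a : H) : wordDist S a a = 0 := by
  simp [wordDist, wordLength_one]

lemma wordDist_one (x : H) : wordDist S 1 x = wordLength S x := by
  simp [wordDist]

lemma wordDist_comm (hSsym : ∀ s ∈ S, s⁻¹ ∈ S) (hS : Gen S) (a b : H) :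
    wordDist S a b = wordDist S b a := by
  unfold wordDist
  rw [← wordLength_inv hSsym hS (a⁻¹ * b)]
  simp [mul_comm]

lemma wordDist_triangle (hS : Gen S) (a b c : H) :
    wordDist S a c ≤ wordDist S a b + wordDist S b c := by
  have : a⁻¹ * c = (a⁻¹ * b) * (b⁻¹ * c) := by group
  unfold wordDist
  rw [this]
  exact wordLength_mul_le hS _ _

lemma wordDist_left (g a b : H) : wordDist S (g * a) (g * b) = wordDist S a b := by
  unfold wordDist
  congr 1
  group

lemma eq_of_wordDist_eq_zero (hS : Gen S) {a b : H} (h : wordDist S a b = 0) : a = b := by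
  have := eq_one_of_wordLength_eq_zero hS h
  have : a * (a⁻¹ * b) = a * 1 := by rw [this]
  simpa [mul_assoc] using this.symm

lemma exists_geodesic (hS : Gen S) (a b : H) :
    ∃ f : ℕ → H, f 0 = a ∧ f (wordDist S a b) = b ∧ IsDiscreteGeodesic S f (wordDist S a b) := by
  obtain ⟨l, hlen, hl, hp⟩ := exists_min_word hS (a⁻¹ * b)
  have hn : l.length = wordDist S a b := hlen
  refine ⟨fun i => a * (l.take i).prod, by simp, ?_, ?_⟩
  · have h1 : l.take (wordDist S a b) = l := List.take_of_length_le (by omega)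
    simp only [h1, hp]
    group
  · intro i j hij hjn
    show wordDist S (a * (l.take i).prod) (a * (l.take j).prod) = j - i
    have hsplit : l.take j = l.take i ++ (l.drop i).take (j - i) := by
      have h' := List.take_add (l := l) (i := i) (j := j - i)
      rw [show i + (j - i) = j by omega] at h'
      exact h'
    have hmid : ((a * (l.take i).prod)⁻¹ * (a * (l.take j).prod)) = ((l.drop i).take (j - i)).prod := by
      rw [hsplit, List.prod_append]
      group
    have hup : wordDist S (a * (l.take i).prod) (a * (l.take j).prod) ≤ j - i := by
      unfold wordDist
      rw [hmid]
      refine le_trans (wordLength_le _ (fun x hx => hl x ?_) rfl) ?_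
      · exact List.mem_of_mem_drop (List.mem_of_mem_take hx)
      · simp [List.length_take]
    have hlow : j - i ≤ wordDist S (a * (l.take i).prod) (a * (l.take j).prod) := by
      set D := wordDist S (a * (l.take i).prod) (a * (l.take j).prod) with hD
      have hfull : (a⁻¹ * b) = (l.take i).prod * (((l.drop i).take (j - i)).prod * (l.drop j).prod) := by
        have h2 : l = l.take j ++ l.drop j := (List.take_append_drop j l).symm
        calc (a⁻¹ * b) = l.prod := hp.symm
        _ = (l.take j).prod * (l.drop j).prod := by rw [← List.prod_append, ← h2]
        _ = _ := by rw [hsplit, List.prod_append, mul_assoc]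
      have hwl : wordDist S a b ≤ i + (D + (l.length - j)) := by
        have e1 : wordLength S (l.take i).prod ≤ i := by
          refine le_trans (wordLength_le _ (fun x hx => hl x (List.mem_of_mem_take hx)) rfl) ?_
          simp [List.length_take]
        have e2 : wordLength S ((l.drop i).take (j - i)).prod = D := by
          rw [hD]
          unfold wordDist
          rw [hmid]
        have e3 : wordLength S (l.drop j).prod ≤ l.length - j := by
          refine le_trans (wordLength_le _ (fun x hx => hl x (List.mem_of_mem_drop hx)) rfl) ?_
          simp
        calc wordDist S a b = wordLength S (a⁻¹ * b) := rfl
        _ ≤ wordLength S (l.take i).prod + wordLength S (((l.drop i).take (j - i)).prod * (l.drop j).prod) := by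
            rw [hfull]; exact wordLength_mul_le hS _ _
        _ ≤ wordLength S (l.take i).prod + (wordLength S ((l.drop i).take (j - i)).prod + wordLength S (l.drop j).prod) :=
            Nat.add_le_add_left (wordLength_mul_le hS _ _) _
        _ ≤ i + (D + (l.length - j)) := by
            rw [← e2]
            exact Nat.add_le_add e1 (Nat.add_le_add_left e3 _)
      omega
    omega

lemma geo_reverse (hSsym : ∀ s ∈ S, s⁻¹ ∈ S) (hS : Gen S) {f : ℕ → H} {n : ℕ}
    (hf : IsDiscreteGeodesic S f n) : IsDiscreteGeodesic S (fun i => f (n - i)) n := by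
  intro i j hij hjn
  simp only
  rw [wordDist_comm hSsym hS, hf (n - j) (n - i) (by omega) (by omega)]
  omega

lemma geo_shift {f : ℕ → H} {n : ℕ} (hf : IsDiscreteGeodesic S f n) (t s : ℕ)
    (h : t + s ≤ n) : IsDiscreteGeodesic S (fun i => f (t + i)) s := by
  intro i j hij hjs
  simp only
  rw [hf (t + i) (t + j) (by omega) (by omega)]
  omega

section GP

lemma wd_tri_r (hS : Gen S) (a b c : H) : (wordDist S a c : ℝ) ≤ wordDist S a b + wordDist S b c := by
  exact_mod_cast wordDist_triangle hS a b c

lemma wd_comm_r (hSsym : ∀ s ∈ S, s⁻¹ ∈ S) (hS : Gen S) (a b : H) : (wordDist S a b : ℝ) = wordDist S b a := by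
  exact_mod_cast congrArg (Nat.cast : ℕ → ℝ) (wordDist_comm hSsym hS a b)

lemma gp_nonneg (hSsym : ∀ s ∈ S, s⁻¹ ∈ S) (hS : Gen S) (x y z : H) : 0 ≤ gromovProd S x y z := by
  have t := wd_tri_r hS x z y
  have c := wd_comm_r hSsym hS z y
  unfold gromovProd
  linarith

lemma gp_le_left (hSsym : ∀ s ∈ S, s⁻¹ ∈ S) (hS : Gen S) (x y z : H) : gromovProd S x y z ≤ wordDist S x z := by
  have t := wd_tri_r hS y x z
  have c1 := wd_comm_r hSsym hS y x
  have c2 := wd_comm_r hSsym hS x z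
  unfold gromovProd
  linarith

lemma gp_le_right (hSsym : ∀ s ∈ S, s⁻¹ ∈ S) (hS : Gen S) (x y z : H) : gromovProd S x y z ≤ wordDist S y z := by
  have t := wd_tri_r hS x y z
  have c1 := wd_comm_r hSsym hS y z
  unfold gromovProd
  linarith

lemma gp_add (hSsym : ∀ s ∈ S, s⁻¹ ∈ S) (hS : Gen S) (x y z w : H) :
    gromovProd S x y z ≤ wordDist S z w + gromovProd S x y w := by
  have t1 := wd_tri_r hS x w z
  have t2 := wd_tri_r hS y w z
  have c1 := wd_comm_r hSsym hS w z
  have c2 := wd_comm_r hSsym hS x w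
  have c3 := wd_comm_r hSsym hS y w
  unfold gromovProd
  linarith

lemma gp_sum (hSsym : ∀ s ∈ S, s⁻¹ ∈ S) (hS : Gen S) (x y w : H) :
    gromovProd S y w x + gromovProd S x w y = wordDist S x y := by
  have c1 := wd_comm_r hSsym hS y x
  have c2 := wd_comm_r hSsym hS w x
  have c3 := wd_comm_r hSsym hS w y
  have c4 := wd_comm_r hSsym hS y w
  unfold gromovProd
  linarith

lemma gp_comm (hSsym : ∀ s ∈ S, s⁻¹ ∈ S) (hS : Gen S) (x y z : H) : gromovProd S x y z = gromovProd S y x z := by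
  have c1 := wd_comm_r hSsym hS x y
  have c2 := wd_comm_r hSsym hS y x
  unfold gromovProd
  linarith

end GP

section Hyp

variable {δ : ℝ}

/-- Any point is close to a point on a geodesic `[x,y]`, within its Gromov product plus `δ+1`. -/
lemma near_geodesic (hSsym : ∀ s ∈ S, s⁻¹ ∈ S) (hS : Gen S) (hδ : 0 ≤ δ)
    (hhyp : WordHyperbolic S δ) (x y z : H) {g : ℕ → H}
    (hg0 : g 0 = x) (hgn : g (wordDist S x y) = y)
    (hg : IsDiscreteGeodesic S g (wordDist S x y)) :
    ∃ i ≤ wordDist S x y, (wordDist S z (g i) : ℝ) ≤ gromovProd S x y z + δ + 1 := by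
  obtain ⟨f, hf0, hfm, hf⟩ := exists_geodesic hS x z
  set t := gromovProd S y z x with ht
  have ht0 : 0 ≤ t := gp_nonneg hSsym hS y z x
  set i := ⌊t⌋₊ with hi
  have hit : (i : ℝ) ≤ t := Nat.floor_le ht0
  have hti : t < (i : ℝ) + 1 := Nat.lt_floor_add_one t
  have hle1 : t ≤ (wordDist S x y : ℝ) := by
    have := gp_le_left hSsym hS y z x
    rw [wd_comm_r hSsym hS y x] at this
    exact this
  have hle2 : t ≤ (wordDist S x z : ℝ) := by
    have := gp_le_right hSsym hS y z x
    rw [wd_comm_r hSsym hS z x] at this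
    exact this
  have hixy : i ≤ wordDist S x y := by
    have : (i : ℝ) ≤ (wordDist S x y : ℝ) := le_trans hit hle1
    exact_mod_cast this
  have hixz : i ≤ wordDist S x z := by
    have : (i : ℝ) ≤ (wordDist S x z : ℝ) := le_trans hit hle2
    exact_mod_cast this
  refine ⟨i, hixy, ?_⟩
  have hthin : (wordDist S (g i) (f i) : ℝ) ≤ δ :=
    hhyp y z x g f hg0 hgn hg hf0 hfm hf i hixy hixz hit
  have hdz : wordDist S (f i) z = wordDist S x z - i := by
    have := hf i (wordDist S x z) hixz le_rfl
    rw [hfm] at this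
    exact this
  have h1 : (wordDist S z (g i) : ℝ) ≤ (wordDist S z (f i) : ℝ) + δ := by
    have tr := wd_tri_r hS z (f i) (g i)
    have c := wd_comm_r hSsym hS (f i) (g i)
    linarith
  have h2 : (wordDist S z (f i) : ℝ) = (wordDist S x z : ℝ) - i := by
    rw [wd_comm_r hSsym hS z (f i)]
    rw [hdz]
    have : (i : ℕ) ≤ wordDist S x z := hixz
    push_cast [Nat.cast_sub this]
    ring
  have hgpid : (wordDist S x z : ℝ) - t = gromovProd S x y z := by
    have c1 := wd_comm_r hSsym hS y x
    have c2 := wd_comm_r hSsym hS z x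
    have c3 := wd_comm_r hSsym hS y z
    rw [ht]
    unfold gromovProd
    linarith
  linarith

/-- The four point inequality with constant `δ+1`. -/
lemma four_point (hSsym : ∀ s ∈ S, s⁻¹ ∈ S) (hS : Gen S) (hδ : 0 ≤ δ)
    (hhyp : WordHyperbolic S δ) (w x y z : H) :
    min (gromovProd S x z w) (gromovProd S z y w) - (δ + 1) ≤ gromovProd S x y w := by
  obtain ⟨α, hα0, hαn, hα⟩ := exists_geodesic hS w x
  obtain ⟨β, hβ0, hβn, hβ⟩ := exists_geodesic hS w y
  obtain ⟨γ, hγ0, hγn, hγ⟩ := exists_geodesic hS w z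
  set t := min (gromovProd S x z w) (gromovProd S z y w) with htdef
  have ht0 : 0 ≤ t := le_min (gp_nonneg hSsym hS x z w) (gp_nonneg hSsym hS z y w)
  set i := ⌊t⌋₊ with hi
  have hit : (i : ℝ) ≤ t := Nat.floor_le ht0
  have hti : t < (i : ℝ) + 1 := Nat.lt_floor_add_one t
  have hb1 : (i : ℝ) ≤ gromovProd S x z w := le_trans hit (min_le_left _ _)
  have hb2 : (i : ℝ) ≤ gromovProd S z y w := le_trans hit (min_le_right _ _)
  have hiwx : i ≤ wordDist S w x := by
    have h' : gromovProd S x z w ≤ (wordDist S x w : ℝ) := gp_le_left hSsym hS x z w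
    rw [wd_comm_r hSsym hS x w] at h'
    exact_mod_cast le_trans hb1 h'
  have hiwz : i ≤ wordDist S w z := by
    have h' : gromovProd S x z w ≤ (wordDist S z w : ℝ) := gp_le_right hSsym hS x z w
    rw [wd_comm_r hSsym hS z w] at h'
    exact_mod_cast le_trans hb1 h'
  have hiwy : i ≤ wordDist S w y := by
    have h' : gromovProd S z y w ≤ (wordDist S y w : ℝ) := gp_le_right hSsym hS z y w
    rw [wd_comm_r hSsym hS y w] at h'
    exact_mod_cast le_trans hb2 h'
  have thin1 : (wordDist S (α i) (γ i) : ℝ) ≤ δ :=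
    hhyp x z w α γ hα0 hαn hα hγ0 hγn hγ i hiwx hiwz hb1
  have thin2 : (wordDist S (γ i) (β i) : ℝ) ≤ δ :=
    hhyp z y w γ β hγ0 hγn hγ hβ0 hβn hβ i hiwz hiwy hb2
  have dxa : (wordDist S x (α i) : ℝ) = (wordDist S w x : ℝ) - i := by
    rw [wd_comm_r hSsym hS x (α i)]
    have := hα i (wordDist S w x) hiwx le_rfl
    rw [hαn] at this
    rw [this]
    push_cast [Nat.cast_sub hiwx]
    ring
  have dby : (wordDist S (β i) y : ℝ) = (wordDist S w y : ℝ) - i := by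
    have := hβ i (wordDist S w y) hiwy le_rfl
    rw [hβn] at this
    rw [this]
    push_cast [Nat.cast_sub hiwy]
    ring
  have tr1 := wd_tri_r hS x (α i) y
  have tr2 := wd_tri_r hS (α i) (γ i) y
  have tr3 := wd_tri_r hS (γ i) (β i) y
  have c1 := wd_comm_r hSsym hS x w
  have c2 := wd_comm_r hSsym hS y w
  unfold gromovProd
  linarith

end Hyp

section Star

variable {δ : ℝ}

lemma pow_wordDist (a : H) {j k : ℕ} (hjk : j ≤ k) :
    wordDist S (a ^ j) (a ^ k) = wordLength S (a ^ (k - j)) := by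
  unfold wordDist
  congr 1
  have : a ^ k = a ^ j * a ^ (k - j) := by
    rw [← pow_add]
    congr 1
    omega
  rw [this, inv_mul_cancel_left]

lemma pow_dist_succ (a : H) (i : ℕ) :
    wordDist S (a ^ i) (a ^ (i + 1)) = wordLength S a := by
  rw [pow_wordDist a (by omega : i ≤ i + 1), show i + 1 - i = 1 from by omega, pow_one]

lemma pow_dist_succ' (hSsym : ∀ s ∈ S, s⁻¹ ∈ S) (hS : Gen S) (a : H) (i : ℕ) :
    wordDist S (a ^ (i + 1)) (a ^ i) = wordLength S a := by
  rw [wordDist_comm hSsym hS]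
  exact pow_dist_succ a i

lemma pow_dist_two (a : H) (i : ℕ) :
    wordDist S (a ^ i) (a ^ (i + 2)) = wordLength S (a * a) := by
  rw [pow_wordDist a (by omega : i ≤ i + 2), show i + 2 - i = 2 from by omega]
  congr 1
  rw [pow_two]

lemma pow_wordLength_le (hS : Gen S) (b : H) (n : ℕ) :
    wordLength S (b ^ n) ≤ n * wordLength S b := by
  induction n with
  | zero => simp [wordLength_one]
  | succ m ih =>
    rw [pow_succ]
    calc wordLength S (b ^ m * b) ≤ wordLength S (b ^ m) + wordLength S b :=
          wordLength_mul_le hS _ _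
    _ ≤ m * wordLength S b + wordLength S b := Nat.add_le_add_right ih _
    _ = (m + 1) * wordLength S b := by ring

/-- Lower bound for lengths of conjugates: `|g⁻¹ a g| ≥ |a²| - |a| - 2(δ+1)`. -/
lemma conj_lower (hSsym : ∀ s ∈ S, s⁻¹ ∈ S) (hS : Gen S) (hδ : 0 ≤ δ)
    (hhyp : WordHyperbolic S δ) (a g : H) :
    (wordLength S (a * a) : ℝ) - wordLength S a - 2 * (δ + 1) ≤
      (wordLength S (g⁻¹ * a * g) : ℝ) := by
  set ε : ℝ := δ + 1 with hε
  have hε0 : 0 < ε := by rw [hε]; linarith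
  clear_value ε
  set s : ℕ → ℝ := fun n => ((wordLength S (a ^ n) : ℕ) : ℝ) with hs
  clear_value s
  have hs0 : s 0 = 0 := by rw [hs]; simp [wordLength_one]
  have hs1 : s 1 = (wordLength S a : ℝ) := by rw [hs]; simp
  have hs2 : s 2 = (wordLength S (a * a) : ℝ) := by rw [hs]; simp [pow_two]
  have hsnn : ∀ n, 0 ≤ s n := by
    intro n; rw [hs]; exact Nat.cast_nonneg _
  have hsub : s 2 ≤ s 1 + s 1 := by
    rw [hs1, hs2]
    have : wordLength S (a * a) ≤ wordLength S a + wordLength S a := wordLength_mul_le hS a a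
    exact_mod_cast this
  set p : ℝ := s 1 - s 2 / 2 with hp
  clear_value p
  have hp0 : 0 ≤ p := by rw [hp]; linarith
  set D : ℝ := (wordLength S (g⁻¹ * a * g) : ℝ) with hD
  clear_value D
  have hD0 : 0 ≤ D := by rw [hD]; exact Nat.cast_nonneg _
  have key : s 1 - 2 * p - 2 * ε ≤ D → (wordLength S (a * a) : ℝ) - wordLength S a - 2 * ε ≤ D := by
    intro h'
    rw [← hs2, ← hs1]
    rw [hp] at h'
    linarith
  apply key
  rcases le_or_gt (s 1) (2 * p + 2 * ε) with hL | hL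
  · linarith
  have qval : ∀ i : ℕ, gromovProd S 1 (a ^ (i + 1)) (a ^ i) = (s i + s 1 - s (i + 1)) / 2 := by
    intro i
    unfold gromovProd
    rw [wordDist_one, pow_dist_succ' hSsym hS, wordDist_one]
    simp [hs, pow_one]
  have hq : ∀ j : ℕ, (s j + s 1 - s (j + 1)) / 2 ≤ p + ε := by
    intro j
    induction j with
    | zero => rw [hs0]; simp; linarith
    | succ m ih =>
      have h4 := four_point hSsym hS hδ hhyp (a ^ (m + 1)) (a ^ m) (a ^ (m + 2)) 1
      rw [← hε] at h4
      have eA : gromovProd S (a ^ m) 1 (a ^ (m + 1)) = (s 1 + s (m + 1) - s m) / 2 := by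
        unfold gromovProd
        rw [pow_dist_succ, wordDist_one, wordDist_comm hSsym hS _ 1, wordDist_one]
        simp [hs, pow_one]
        try ring
      have eB : gromovProd S 1 (a ^ (m + 2)) (a ^ (m + 1)) = (s (m + 1) + s 1 - s (m + 2)) / 2 :=
        qval (m + 1)
      have eC : gromovProd S (a ^ m) (a ^ (m + 2)) (a ^ (m + 1)) = (s 1 + s 1 - s 2) / 2 := by
        unfold gromovProd
        rw [pow_dist_succ, pow_dist_succ' hSsym hS a (m + 1), pow_dist_two]
        simp [hs, pow_one, pow_two]
      rw [eB, eC] at h4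
      have hps : (s 1 + s 1 - s 2) / 2 = p := by rw [hp]; ring
      rw [hps] at h4
      have hA : p + ε < gromovProd S (a ^ m) 1 (a ^ (m + 1)) := by
        rw [eA]
        linarith
      rcases min_le_iff.mp (by linarith : min (gromovProd S (a ^ m) 1 (a ^ (m + 1)))
          ((s (m + 1) + s 1 - s (m + 2)) / 2) ≤ p + ε) with h' | h'
      · linarith
      · exact h'
  have hgrow : ∀ n : ℕ, (n : ℝ) * (s 1 - 2 * p - 2 * ε) ≤ s n := by
    intro n
    induction n with
    | zero => simp [hs0]
    | succ m ih =>
      have h5 := hq m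
      have h6 : s m + s 1 - 2 * (p + ε) ≤ s (m + 1) := by linarith
      push_cast
      have expand : ((m : ℝ) + 1) * (s 1 - 2 * p - 2 * ε)
          = (m : ℝ) * (s 1 - 2 * p - 2 * ε) + (s 1 - 2 * p - 2 * ε) := by ring
      rw [expand]
      linarith
  have hupper : ∀ n : ℕ, s n ≤ 2 * (wordLength S g : ℝ) + (n : ℝ) * D := by
    intro n
    have e0 : (g⁻¹ * a * g) ^ n = g⁻¹ * a ^ n * g := by
      induction n with
      | zero => simp
      | succ m ih => rw [pow_succ, ih, pow_succ]; group
    have e : a ^ n = g * (g⁻¹ * a * g) ^ n * g⁻¹ := by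
      rw [e0]; group
    have h1 : wordLength S (a ^ n) ≤
        wordLength S g + wordLength S ((g⁻¹ * a * g) ^ n) + wordLength S g⁻¹ := by
      calc wordLength S (a ^ n) = wordLength S (g * (g⁻¹ * a * g) ^ n * g⁻¹) := by rw [← e]
      _ ≤ wordLength S (g * (g⁻¹ * a * g) ^ n) + wordLength S g⁻¹ := wordLength_mul_le hS _ _
      _ ≤ wordLength S g + wordLength S ((g⁻¹ * a * g) ^ n) + wordLength S g⁻¹ :=
          Nat.add_le_add_right (wordLength_mul_le hS _ _) _
    have h2 : wordLength S ((g⁻¹ * a * g) ^ n) ≤ n * wordLength S (g⁻¹ * a * g) :=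
      pow_wordLength_le hS _ _
    have h3 : wordLength S g⁻¹ = wordLength S g := wordLength_inv hSsym hS g
    have h7 : wordLength S (a ^ n) ≤ 2 * wordLength S g + n * wordLength S (g⁻¹ * a * g) := by
      omega
    have h8 : ((wordLength S (a ^ n) : ℕ) : ℝ)
        ≤ ((2 * wordLength S g + n * wordLength S (g⁻¹ * a * g) : ℕ) : ℝ) := by
      exact_mod_cast h7
    rw [hs, hD]
    calc ((wordLength S (a ^ n) : ℕ) : ℝ)
        ≤ ((2 * wordLength S g + n * wordLength S (g⁻¹ * a * g) : ℕ) : ℝ) := h8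
    _ = 2 * (wordLength S g : ℝ) + (n : ℝ) * (wordLength S (g⁻¹ * a * g) : ℝ) := by
        push_cast; ring
  by_contra hcon
  push_neg at hcon
  have hgap : 0 < (s 1 - 2 * p - 2 * ε) - D := by linarith
  obtain ⟨n, hn⟩ := exists_nat_gt (2 * (wordLength S g : ℝ) / ((s 1 - 2 * p - 2 * ε) - D))
  have h1 : (n : ℝ) * (s 1 - 2 * p - 2 * ε) ≤ 2 * (wordLength S g : ℝ) + (n : ℝ) * D :=
    le_trans (hgrow n) (hupper n)
  have h4 : 2 * (wordLength S g : ℝ) < (n : ℝ) * ((s 1 - 2 * p - 2 * ε) - D) := by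
    rw [div_lt_iff₀ hgap] at hn
    linarith
  nlinarith

/-- An almost conjugacy minimal element has small Gromov product `(h,h⁻¹)_1`. -/
lemma acm_gp (hSsym : ∀ s ∈ S, s⁻¹ ∈ S) (hS : Gen S) (hδ : 0 ≤ δ)
    (hhyp : WordHyperbolic S δ) {κ : ℝ} (hκ : 0 ≤ κ) {h : H}
    (hacm : AlmostConjMin S κ h) :
    2 * (wordLength S h : ℝ) - wordLength S (h * h) ≤ 2 * (δ + κ + 2) := by
  set n := wordLength S h with hn
  obtain ⟨γ, hγ0, hγn, hγ⟩ := exists_geodesic hS 1 h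
  rw [wordDist_one] at hγn hγ
  set P := gromovProd S 1 (h * h) h with hP
  have hP0 : 0 ≤ P := by rw [hP]; exact gp_nonneg hSsym hS _ _ _
  have hdleft : wordDist S h (h * h) = wordDist S 1 h := by
    simpa using wordDist_left (S := S) h 1 h
  have key : ∀ i : ℕ, (i : ℝ) ≤ P → 2 * i ≤ n → 2 * (i : ℝ) ≤ δ + κ := by
    intro i hiP hin
    have hd1 : wordDist S h 1 = n := by rw [wordDist_comm hSsym hS, wordDist_one]
    have hd2 : wordDist S h (h * h) = n := by rw [hdleft, wordDist_one]
    set f : ℕ → H := fun i => γ (n - i) with hf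
    have hf0 : f 0 = h := by simp [hf, hn, hγn]
    have hfn : f (wordDist S h 1) = 1 := by simp [hf, hd1, hγ0]
    have hfg : IsDiscreteGeodesic S f (wordDist S h 1) := by
      rw [hd1]
      exact geo_reverse hSsym hS hγ
    set g : ℕ → H := fun i => h * γ i with hg
    have hg0 : g 0 = h := by simp [hg, hγ0]
    have hgn : g (wordDist S h (h * h)) = h * h := by simp [hg, hd2, hn, hγn]
    have hgg : IsDiscreteGeodesic S g (wordDist S h (h * h)) := by
      rw [hd2]
      intro i j hij hjn
      simp only [hg]
      rw [wordDist_left]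
      exact hγ i j hij hjn
    have hin' : i ≤ wordDist S h 1 := by omega
    have hin'' : i ≤ wordDist S h (h * h) := by omega
    have hthin : (wordDist S (f i) (g i) : ℝ) ≤ δ :=
      hhyp 1 (h * h) h f g hf0 hfn hfg hg0 hgn hgg i hin' hin'' (by rw [← hP]; exact hiP)
    have hconj : wordLength S ((γ i)⁻¹ * h * γ i) = wordDist S (γ i) (h * γ i) := by
      unfold wordDist
      congr 1
      group
    have hdist : (wordDist S (γ i) (h * γ i) : ℝ) ≤ (n : ℝ) - 2 * i + δ := by
      have tr := wd_tri_r hS (γ i) (γ (n - i)) (h * γ i)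
      have e1 : wordDist S (γ i) (γ (n - i)) = n - i - i := hγ i (n - i) (by omega) (by omega)
      have e2 : (wordDist S (γ (n - i)) (h * γ i) : ℝ) ≤ δ := hthin
      have e1' : ((n - i - i : ℕ) : ℝ) = (n : ℝ) - 2 * i := by
        have h1 : i ≤ n - i := by omega
        have h2 : i ≤ n := by omega
        push_cast [Nat.cast_sub h1, Nat.cast_sub h2]
        ring
      rw [e1] at tr
      rw [e1'] at tr
      linarith
    have hacm' := hacm (γ i)
    rw [hconj] at hacm'
    have : (n : ℝ) ≤ (n : ℝ) - 2 * i + δ + κ := le_trans hacm' (by linarith)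
    linarith
  set i := min ⌊P⌋₊ (n / 2) with hi
  have hiP : (i : ℝ) ≤ P := by
    have h1 : (i : ℕ) ≤ ⌊P⌋₊ := min_le_left _ _
    have h2 : ((i : ℕ) : ℝ) ≤ (⌊P⌋₊ : ℝ) := by exact_mod_cast h1
    exact le_trans h2 (Nat.floor_le hP0)
  have hin : 2 * i ≤ n := by
    have := min_le_right ⌊P⌋₊ (n / 2)
    omega
  have hsmall := key i hiP hin
  have h2P : 2 * P = 2 * (n : ℝ) - wordLength S (h * h) := by
    rw [hP]
    unfold gromovProd
    have e2 : (wordDist S (h * h) h : ℝ) = (n : ℝ) := by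
      rw [wd_comm_r hSsym hS, hdleft, wordDist_one]
    rw [wordDist_one, wordDist_one]
    rw [hn] at e2 ⊢
    linarith
  rcases le_or_gt (⌊P⌋₊) (n / 2) with hc | hc
  · have hieq : i = ⌊P⌋₊ := by rw [hi]; omega
    have hPi : P < (i : ℝ) + 1 := by
      rw [hieq]
      exact Nat.lt_floor_add_one P
    linarith
  · have hieq : i = n / 2 := by rw [hi]; omega
    have hni : (n : ℝ) ≤ 2 * (i : ℝ) + 1 := by
      have h9 : n ≤ 2 * i + 1 := by omega
      exact_mod_cast h9
    have hlen0 : (0 : ℝ) ≤ wordLength S (h * h) := Nat.cast_nonneg _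
    linarith

end Star

section Morse

variable {δ : ℝ}

/-- Divergence lemma: a point on a geodesic whose endpoints are the endpoints of a
discrete chain with steps `≤ B` is within `B + kδ` of the chain, where `N ≤ 2^k`. -/
lemma div_lemma (hSsym : ∀ s ∈ S, s⁻¹ ∈ S) (hS : Gen S) (hδ : 0 ≤ δ)
    (hhyp : WordHyperbolic S δ) (B : ℝ) (k : ℕ) :
    ∀ N : ℕ, N ≤ 2 ^ k → 1 ≤ N → ∀ z : ℕ → H,
      (∀ j, j < N → (wordDist S (z j) (z (j + 1)) : ℝ) ≤ B) →
      ∀ f : ℕ → H, f 0 = z 0 → f (wordDist S (z 0) (z N)) = z N →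
      IsDiscreteGeodesic S f (wordDist S (z 0) (z N)) →
      ∀ i, i ≤ wordDist S (z 0) (z N) →
      ∃ j, j ≤ N ∧ (wordDist S (z j) (f i) : ℝ) ≤ B + k * δ := by
  induction k with
  | zero =>
    intro N hN2 hN1 z hz f hf0 hfn hf i hi
    have hN : N = 1 := by simpa using le_antisymm hN2 hN1
    subst hN
    refine ⟨0, by omega, ?_⟩
    have e1 : wordDist S (f 0) (f i) = i := by
      have := hf 0 i (by omega) hi
      simpa using this
    rw [← hf0, e1]
    have h1 : (i : ℝ) ≤ (wordDist S (z 0) (z 1) : ℝ) := by exact_mod_cast hi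
    have h2 := hz 0 (by omega)
    push_cast
    linarith
  | succ k IH =>
    intro N hN2 hN1 z hz f hf0 hfn hf i hi
    rcases le_or_gt N (2 ^ k) with hNk | hNk
    · obtain ⟨j, hj, hjd⟩ := IH N hNk hN1 z hz f hf0 hfn hf i hi
      refine ⟨j, hj, ?_⟩
      have : (k : ℝ) * δ ≤ ((k : ℝ) + 1) * δ := by nlinarith
      push_cast
      linarith
    have hN2' : 2 ≤ N := by
      have h1 : 1 ≤ 2 ^ k := Nat.one_le_two_pow
      omega
    set h : ℕ := (N + 1) / 2 with hh
    have hpow : 2 ^ (k + 1) = 2 * 2 ^ k := by ring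
    have hh1 : 1 ≤ h := by omega
    have hhN : h < N := by omega
    have hhk : h ≤ 2 ^ k := by omega
    have hNhk : N - h ≤ 2 ^ k := by omega
    have hNh1 : 1 ≤ N - h := by omega
    have hhle : h ≤ N := by omega
    clear_value h
    obtain ⟨g1, hg10, hg1n, hg1⟩ := exists_geodesic hS (z 0) (z h)
    obtain ⟨g2, hg20, hg2n, hg2⟩ := exists_geodesic hS (z N) (z h)
    have hsum := gp_sum hSsym hS (z 0) (z N) (z h)
    rcases le_or_gt (i : ℝ) (gromovProd S (z N) (z h) (z 0)) with hcase | hcase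
    · -- near the first half
      have hizh : i ≤ wordDist S (z 0) (z h) := by
        have h1 : gromovProd S (z N) (z h) (z 0) ≤ (wordDist S (z h) (z 0) : ℝ) :=
          gp_le_right hSsym hS _ _ _
        rw [wd_comm_r hSsym hS] at h1
        exact_mod_cast le_trans hcase h1
      have hthin : (wordDist S (f i) (g1 i) : ℝ) ≤ δ :=
        hhyp (z N) (z h) (z 0) f g1 hf0 hfn hf hg10 hg1n hg1 i hi hizh hcase
      obtain ⟨j, hj, hjd⟩ := IH h hhk hh1 z (fun j hj' => hz j (by omega)) g1 hg10 hg1n hg1 i hizh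
      refine ⟨j, by omega, ?_⟩
      have tr := wd_tri_r hS (z j) (g1 i) (f i)
      have c := wd_comm_r hSsym hS (g1 i) (f i)
      push_cast
      push_cast at hjd
      linarith
    · -- near the second half; reverse everything
      set n' : ℕ := wordDist S (z 0) (z N) with hn'
      clear_value n'
      set i' : ℕ := n' - i with hi'
      have hgp2 : (i' : ℝ) ≤ gromovProd S (z 0) (z h) (z N) := by
        have e : (i' : ℝ) = (n' : ℝ) - i := by
          rw [hi']
          push_cast [Nat.cast_sub hi]
          ring
        rw [e]
        linarith
      set z' : ℕ → H := fun j => z (N - j) with hz'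
      have hz'step : ∀ j, j < N - h → (wordDist S (z' j) (z' (j + 1)) : ℝ) ≤ B := by
        intro j hj
        have e1 : z' j = z (N - j - 1 + 1) := by
          simp only [hz']
          congr 1 <;> omega
        have e2 : z' (j + 1) = z (N - j - 1) := by
          simp only [hz']
          congr 1 <;> omega
        rw [e1, e2, wordDist_comm hSsym hS]
        exact hz (N - j - 1) (by omega)
      have hz'0 : z' 0 = z N := by simp only [hz']; simp
      have hz'e : z' (N - h) = z h := by
        simp only [hz']
        congr 1 <;> omega
      set f' : ℕ → H := fun j => f (n' - j) with hf'
      have hdist_comm : wordDist S (z N) (z 0) = n' := by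
        rw [wordDist_comm hSsym hS, hn']
      have hf'0 : f' 0 = z N := by simp only [hf']; simpa using hfn
      have hf'n : f' (wordDist S (z N) (z 0)) = z 0 := by
        rw [hdist_comm]
        simp only [hf']
        simpa using hf0
      have hf'g : IsDiscreteGeodesic S f' (wordDist S (z N) (z 0)) := by
        rw [hdist_comm]
        simp only [hf']
        exact geo_reverse hSsym hS hf
      have hi'n : i' ≤ wordDist S (z N) (z 0) := by
        rw [hdist_comm]
        omega
      have hi'h : i' ≤ wordDist S (z N) (z h) := by
        have h1 : gromovProd S (z 0) (z h) (z N) ≤ (wordDist S (z h) (z N) : ℝ) :=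
          gp_le_right hSsym hS _ _ _
        rw [wd_comm_r hSsym hS] at h1
        exact_mod_cast le_trans hgp2 h1
      have hthin : (wordDist S (f' i') (g2 i') : ℝ) ≤ δ :=
        hhyp (z 0) (z h) (z N) f' g2 hf'0 hf'n hf'g hg20 hg2n hg2 i' hi'n hi'h hgp2
      have hf'i : f' i' = f i := by
        simp only [hf', hi']
        congr 1 <;> omega
      rw [hf'i] at hthin
      have hz'0' : z' 0 = z N := hz'0
      obtain ⟨j', hj', hjd⟩ := IH (N - h) hNhk hNh1 z' hz'step g2
        (by rw [hz'0]; exact hg20) (by rw [hz'0, hz'e]; exact hg2n)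
        (by rw [hz'0, hz'e]; exact hg2) i' (by rw [hz'0, hz'e]; exact hi'h)
      refine ⟨N - j', by omega, ?_⟩
      have hzj : z' j' = z (N - j') := rfl
      rw [hzj] at hjd
      have tr := wd_tri_r hS (z (N - j')) (g2 i') (f i)
      have c := wd_comm_r hSsym hS (g2 i') (f i)
      push_cast
      push_cast at hjd
      linarith

end Morse

section StepB

variable {δ : ℝ}

/-- Concatenation of two chains. -/
def cat (u : ℕ → H) (A : ℕ) (v : ℕ → H) : ℕ → H := fun j => if j ≤ A then u j else v (j - A)

lemma cat_zero (u : ℕ → H) (A : ℕ) (v : ℕ → H) : cat u A v 0 = u 0 := by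
  unfold cat
  simp

lemma cat_last {u v : ℕ → H} {A : ℕ} (Bn : ℕ) (hA : u A = v 0) :
    cat u A v (A + Bn) = v Bn := by
  unfold cat
  rcases Nat.eq_zero_or_pos Bn with h | h
  · subst h
    simp [hA]
  · rw [if_neg (by omega)]
    congr 1
    omega

lemma cat_step {u v : ℕ → H} {A Bn : ℕ} {B : ℝ}
    (hu : ∀ j, j < A → (wordDist S (u j) (u (j + 1)) : ℝ) ≤ B)
    (hv : ∀ j, j < Bn → (wordDist S (v j) (v (j + 1)) : ℝ) ≤ B)
    (hA : u A = v 0) :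
    ∀ j, j < A + Bn → (wordDist S (cat u A v j) (cat u A v (j + 1)) : ℝ) ≤ B := by
  intro j hj
  unfold cat
  rcases lt_trichotomy j A with h | h | h
  · rw [if_pos (by omega), if_pos (by omega)]
    exact hu j h
  · subst h
    rcases Nat.eq_zero_or_pos Bn with h0 | h0
    · omega
    · rw [if_pos le_rfl, if_neg (by omega), show j + 1 - j = 1 from by omega, hA]
      exact hv 0 h0
  · rw [if_neg (by omega), if_neg (by omega), show j + 1 - A = (j - A) + 1 from by omega]
    exact hv (j - A) (by omega)

lemma cat_cases {u v : ℕ → H} {A : ℕ} (Bn : ℕ) (j : ℕ) (hj : j ≤ A + Bn) :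
    (j ≤ A ∧ cat u A v j = u j) ∨ (∃ j', j' ≤ Bn ∧ cat u A v j = v j') := by
  unfold cat
  rcases le_or_gt j A with h | h
  · exact Or.inl ⟨h, by rw [if_pos h]⟩
  · exact Or.inr ⟨j - A, by omega, by rw [if_neg (by omega)]⟩

noncomputable def rho0C (K C δ : ℝ) : ℝ :=
  2 * (K + C + δ + 3 * δ * Real.sqrt (K * C)) + 4 * (3 * δ * Real.sqrt (8 * K + 2)) ^ 2

lemma rho0C_nonneg {K C δ : ℝ} (hK : 1 ≤ K) (hC : 0 ≤ C) (hδ : 0 ≤ δ) :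
    0 ≤ rho0C K C δ := by
  unfold rho0C
  have h1 : 0 ≤ Real.sqrt (K * C) := Real.sqrt_nonneg _
  have h2 : 0 ≤ (3 * δ * Real.sqrt (8 * K + 2)) ^ 2 := sq_nonneg _
  nlinarith

lemma natlog_le_sqrt (M : ℕ) (hM : 1 ≤ M) :
    (Nat.log 2 M : ℝ) ≤ 3 * Real.sqrt M := by
  set L := Nat.log 2 M with hL
  have h1 : 2 ^ L ≤ M := Nat.pow_log_le_self 2 (by omega)
  have h1' : ((2 : ℝ)) ^ L ≤ (M : ℝ) := by exact_mod_cast h1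
  have hsq2 : (Real.sqrt 2) ^ 2 = 2 := Real.sq_sqrt (by norm_num)
  have h2 : ((Real.sqrt 2) ^ L) ^ 2 ≤ (M : ℝ) := by
    rw [← pow_mul, mul_comm, pow_mul, hsq2]
    exact h1'
  have h3 : (Real.sqrt 2) ^ L ≤ Real.sqrt M := Real.le_sqrt_of_sq_le h2
  have h4 : 1 + (L : ℝ) * (Real.sqrt 2 - 1) ≤ (1 + (Real.sqrt 2 - 1)) ^ L := by
    apply one_add_mul_le_pow
    have : 0 ≤ Real.sqrt 2 := Real.sqrt_nonneg _
    linarith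
  have h5 : (1 : ℝ) + (Real.sqrt 2 - 1) = Real.sqrt 2 := by ring
  rw [h5] at h4
  have h6 : (7 : ℝ) / 5 ≤ Real.sqrt 2 := by
    apply Real.le_sqrt_of_sq_le
    norm_num
  have h7 : (L : ℝ) * (2 / 5) ≤ Real.sqrt M := by
    have : (L : ℝ) * (2 / 5) ≤ 1 + (L : ℝ) * (Real.sqrt 2 - 1) := by
      have hL0 : (0 : ℝ) ≤ L := Nat.cast_nonneg _
      nlinarith
    linarith
  linarith

lemma sqrt_selfbound {x P Q : ℝ} (hx : 0 ≤ x) (hP : 0 ≤ P) (hQ : 0 ≤ Q)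
    (h : x ≤ P + Q * Real.sqrt x) : x ≤ 2 * P + 4 * Q ^ 2 := by
  have hs : Real.sqrt x ^ 2 = x := Real.sq_sqrt hx
  have hs0 : 0 ≤ Real.sqrt x := Real.sqrt_nonneg _
  nlinarith [sq_nonneg (Real.sqrt x - 2 * Q)]

lemma sqrt_add_le {a b : ℝ} (ha : 0 ≤ a) (hb : 0 ≤ b) :
    Real.sqrt (a + b) ≤ Real.sqrt a + Real.sqrt b := by
  have h1 : a + b ≤ (Real.sqrt a + Real.sqrt b) ^ 2 := by
    have e1 : Real.sqrt a ^ 2 = a := Real.sq_sqrt ha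
    have e2 : Real.sqrt b ^ 2 = b := Real.sq_sqrt hb
    have e3 : 0 ≤ Real.sqrt a * Real.sqrt b :=
      mul_nonneg (Real.sqrt_nonneg _) (Real.sqrt_nonneg _)
    nlinarith
  calc Real.sqrt (a + b) ≤ Real.sqrt ((Real.sqrt a + Real.sqrt b) ^ 2) :=
        Real.sqrt_le_sqrt h1
  _ = Real.sqrt a + Real.sqrt b :=
        Real.sqrt_sq (by positivity)

set_option maxHeartbeats 2000000 in
/-- Every point on a geodesic joining the endpoints of a quasi-geodesic chain is within
`rho0C K C δ` of the chain. -/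
lemma geodesic_near_chain (hSsym : ∀ s ∈ S, s⁻¹ ∈ S) (hS : Gen S) (hδ : 0 ≤ δ)
    (hhyp : WordHyperbolic S δ) {K C : ℝ} (hK : 1 ≤ K) (hC : 0 ≤ C)
    (y : ℕ → H) (m : ℕ)
    (hstep : ∀ j, j < m → (wordDist S (y j) (y (j + 1)) : ℝ) ≤ K + C)
    (hlo : ∀ j j', j ≤ j' → j' ≤ m → ((j' : ℝ) - j) / K - C ≤ (wordDist S (y j) (y j') : ℝ))
    {Γ : ℕ → H} (hΓ0 : Γ 0 = y 0) (hΓn : Γ (wordDist S (y 0) (y m)) = y m)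
    (hΓ : IsDiscreteGeodesic S Γ (wordDist S (y 0) (y m))) :
    ∀ t, t ≤ wordDist S (y 0) (y m) →
      ∃ s, s ≤ m ∧ (wordDist S (Γ t) (y s) : ℝ) ≤ rho0C K C δ := by
  classical
  set n := wordDist S (y 0) (y m) with hn
  -- choose closest chain points
  have hargmin : ∀ t : ℕ, ∃ s, s ≤ m ∧ ∀ s', s' ≤ m →
      wordDist S (Γ t) (y s) ≤ wordDist S (Γ t) (y s') := by
    intro t
    obtain ⟨s, hs1, hs2⟩ := Finset.exists_min_image (Finset.range (m + 1))
      (fun s => wordDist S (Γ t) (y s)) ⟨0, by simp⟩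
    refine ⟨s, by simpa using Nat.lt_succ_iff.mp (Finset.mem_range.mp hs1), ?_⟩
    intro s' hs'
    exact hs2 s' (Finset.mem_range.mpr (by omega))
  choose σ hσm hσmin using hargmin
  -- the maximum over the geodesic
  obtain ⟨t₀, ht₀n, ht₀max⟩ : ∃ t₀, t₀ ≤ n ∧ ∀ t, t ≤ n →
      wordDist S (Γ t) (y (σ t)) ≤ wordDist S (Γ t₀) (y (σ t₀)) := by
    obtain ⟨t₀, h1, h2⟩ := Finset.exists_max_image (Finset.range (n + 1))
      (fun t => wordDist S (Γ t) (y (σ t))) ⟨0, by simp⟩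
    refine ⟨t₀, by simpa using Nat.lt_succ_iff.mp (Finset.mem_range.mp h1), ?_⟩
    intro t ht
    exact h2 t (Finset.mem_range.mpr (by omega))
  set ρ := wordDist S (Γ t₀) (y (σ t₀)) with hρ
  suffices hbound : (ρ : ℝ) ≤ rho0C K C δ by
    intro t ht
    refine ⟨σ t, hσm t, ?_⟩
    have h1 : wordDist S (Γ t) (y (σ t)) ≤ ρ := ht₀max t ht
    have h1' : (wordDist S (Γ t) (y (σ t)) : ℝ) ≤ (ρ : ℝ) := by exact_mod_cast h1
    linarith
  -- farness of all chain points from Γ t₀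
  have hfar : ∀ s, s ≤ m → ρ ≤ wordDist S (Γ t₀) (y s) := fun s hs => hσmin t₀ s hs
  rcases Nat.eq_zero_or_pos ρ with h0 | hρ1
  · rw [h0]
    exact_mod_cast rho0C_nonneg hK hC hδ
  -- window on the geodesic
  set tl := t₀ - 3 * ρ with htl
  set tr := min (t₀ + 3 * ρ) n with htr
  have htl0 : tl ≤ t₀ := by omega
  have htr0 : t₀ ≤ tr := by omega
  have htrn : tr ≤ n := by omega
  have htrtl : tr - tl ≤ 6 * ρ := by omega
  set sl := σ tl with hsl
  set sr := σ tr with hsr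
  have hslm : sl ≤ m := hσm tl
  have hsrm : sr ≤ m := hσm tr
  set ll := wordDist S (Γ tl) (y sl) with hll
  have hlρ : ll ≤ ρ := ht₀max tl (by omega)
  set lr := wordDist S (Γ tr) (y sr) with hlr
  have hrρ : lr ≤ ρ := ht₀max tr (by omega)
  obtain ⟨cl, hcl0, hcln, hclg⟩ := exists_geodesic hS (Γ tl) (y sl)
  rw [← hll] at hcln hclg
  obtain ⟨cr, hcr0, hcrn, hcrg⟩ := exists_geodesic hS (y sr) (Γ tr)
  have hlr' : wordDist S (y sr) (Γ tr) = lr := by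
    rw [hlr, wordDist_comm hSsym hS]
  rw [hlr'] at hcrn hcrg
  -- middle chain
  set L2 := (if sl ≤ sr then sr - sl else sl - sr) with hL2
  set mid : ℕ → H := fun j => y (if sl ≤ sr then sl + j else sl - j) with hmid
  have hmid0 : mid 0 = y sl := by
    simp only [hmid]
    by_cases h : sl ≤ sr <;> simp [h]
  have hmidL : mid L2 = y sr := by
    simp only [hmid, hL2]
    by_cases h : sl ≤ sr
    · rw [if_pos h, if_pos h]
      congr 1
      omega
    · rw [if_neg h, if_neg h]
      congr 1
      omega
  have hmidmem : ∀ j, j ≤ L2 → (if sl ≤ sr then sl + j else sl - j) ≤ m := by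
    intro j hj
    rw [hL2] at hj
    by_cases h : sl ≤ sr
    · rw [if_pos h] at hj ⊢
      omega
    · rw [if_neg h] at hj ⊢
      omega
  have hmidstep : ∀ j, j < L2 → (wordDist S (mid j) (mid (j + 1)) : ℝ) ≤ K + C := by
    intro j hj
    rw [hL2] at hj
    simp only [hmid]
    by_cases h : sl ≤ sr
    · rw [if_pos h] at hj
      rw [if_pos h, if_pos h, show sl + (j + 1) = (sl + j) + 1 from by omega]
      exact hstep (sl + j) (by omega)
    · rw [if_neg h] at hj
      rw [if_neg h, if_neg h, wordDist_comm hSsym hS,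
        show sl - j = (sl - (j + 1)) + 1 from by omega]
      exact hstep (sl - (j + 1)) (by omega)
  -- the composite chain
  set z1 : ℕ → H := cat mid L2 cr with hz1
  set z : ℕ → H := cat cl ll z1 with hz
  set N' := ll + (L2 + lr) with hN'
  have hz0 : z 0 = Γ tl := by
    rw [hz, cat_zero, hcl0]
  have hjoint1 : mid L2 = cr 0 := by rw [hmidL, hcr0]
  have hjoint0 : cl ll = z1 0 := by
    rw [hz1, cat_zero, hcln, hmid0]
  have hz1L : z1 (L2 + lr) = Γ tr := by
    rw [hz1, cat_last lr hjoint1, hcrn]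
  have hzN : z N' = Γ tr := by
    rw [hz, hN', cat_last (L2 + lr) hjoint0, hz1L]
  have hclstep : ∀ j, j < ll → (wordDist S (cl j) (cl (j + 1)) : ℝ) ≤ K + C := by
    intro j hj
    have := hclg j (j + 1) (by omega) (by omega)
    rw [this]
    have : ((j + 1 - j : ℕ) : ℝ) = 1 := by
      rw [show j + 1 - j = 1 from by omega]
      norm_num
    rw [this]
    linarith
  have hcrstep : ∀ j, j < lr → (wordDist S (cr j) (cr (j + 1)) : ℝ) ≤ K + C := by
    intro j hj
    have := hcrg j (j + 1) (by omega) (by omega)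
    rw [this]
    have : ((j + 1 - j : ℕ) : ℝ) = 1 := by
      rw [show j + 1 - j = 1 from by omega]
      norm_num
    rw [this]
    linarith
  have hzstep : ∀ j, j < N' → (wordDist S (z j) (z (j + 1)) : ℝ) ≤ K + C := by
    rw [hz, hN']
    exact cat_step hclstep (cat_step hmidstep hcrstep hjoint1) hjoint0
  -- farness of the composite chain from Γ t₀
  have hzfar : ∀ j, j ≤ N' → ρ ≤ wordDist S (Γ t₀) (z j) := by
    intro j hj
    rw [hN'] at hj
    rw [hz]
    rcases cat_cases (u := cl) (v := z1) (A := ll) (L2 + lr) j hj with ⟨hjl, hje⟩ | ⟨j', hj', hje⟩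
    · -- on the left connector
      rw [hje]
      rcases le_or_gt (3 * ρ) t₀ with hcase | hcase
      · have hd1 : wordDist S (Γ tl) (Γ t₀) = t₀ - tl := hΓ tl t₀ htl0 ht₀n
        have hd2 : wordDist S (Γ tl) (cl j) = j := by
          have := hclg 0 j (by omega) hjl
          rw [hcl0] at this
          simpa using this
        have tri := wordDist_triangle hS (Γ t₀) (cl j) (Γ tl)
        have c1 : wordDist S (cl j) (Γ tl) = j := by
          rw [wordDist_comm hSsym hS]; exact hd2
        have c2 : wordDist S (Γ t₀) (Γ tl) = t₀ - tl := by
          rw [wordDist_comm hSsym hS]; exact hd1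
        rw [c1] at tri
        omega
      · -- tl = 0, the connector is trivial
        have htl' : tl = 0 := by omega
        have hll0 : ll = 0 := by
          have h1 := hσmin tl 0 (by omega)
          have h2 : wordDist S (Γ tl) (y 0) = 0 := by
            rw [htl', hΓ0, wordDist_self]
          rw [← hll] at h1
          omega
        have hj0 : j = 0 := by omega
        rw [hj0, hcl0, htl', hΓ0]
        exact hfar 0 (by omega)
    · -- on the middle chain or right connector
      rw [hje]
      rw [hz1] at *
      rcases cat_cases (u := mid) (v := cr) (A := L2) lr j' hj' with ⟨hjm, hje'⟩ | ⟨j'', hj'', hje'⟩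
      · rw [hje']
        simp only [hmid]
        exact hfar _ (hmidmem j' hjm)
      · rw [hje']
        rcases le_or_gt (t₀ + 3 * ρ) n with hcase | hcase
        · have htr' : tr = t₀ + 3 * ρ := by omega
          have hd1 : wordDist S (Γ t₀) (Γ tr) = tr - t₀ := hΓ t₀ tr htr0 htrn
          have hd2 : wordDist S (cr j'') (Γ tr) = lr - j'' := by
            have := hcrg j'' lr hj'' le_rfl
            rw [hcrn] at this
            exact this
          have tri := wordDist_triangle hS (Γ t₀) (cr j'') (Γ tr)
          rw [hd1, hd2] at tri
          omega
        · have htr' : tr = n := by omega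
          have hlr0 : lr = 0 := by
            have h1 := hσmin tr m le_rfl
            have h2 : wordDist S (Γ tr) (y m) = 0 := by
              rw [htr', hΓn, wordDist_self]
            rw [← hlr] at h1
            omega
          have hj0 : j'' = 0 := by omega
          rw [hj0, hcr0]
          exact hfar sr hsrm
  -- nondegeneracy
  have hN'1 : 1 ≤ N' := by
    by_contra hcon
    have hN0 : N' = 0 := by omega
    have hll0 : ll = 0 := by omega
    have hL20 : L2 = 0 := by omega
    have hlr0 : lr = 0 := by omega
    have hslsr : sl = sr := by
      rw [hL2] at hL20
      by_cases h : sl ≤ sr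
      · rw [if_pos h] at hL20
        omega
      · rw [if_neg h] at hL20
        omega
    have he1 : Γ tl = y sl := eq_of_wordDist_eq_zero hS hll0
    have he2 : Γ tr = y sr := by
      apply eq_of_wordDist_eq_zero hS
      rw [← hlr]
      exact hlr0
    have hd : wordDist S (Γ tl) (Γ tr) = tr - tl := hΓ tl tr (by omega) htrn
    have hd0 : wordDist S (Γ tl) (Γ tr) = 0 := by
      rw [he1, hslsr, ← he2, wordDist_self]
    have htt : tr = tl := by omega
    have ht0tl : t₀ = tl := by omega
    have hkey : ρ ≤ wordDist S (Γ t₀) (y sl) := hfar sl hslm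
    have hkey2 : wordDist S (Γ t₀) (y sl) = 0 := by
      rw [ht0tl, ← he1, wordDist_self]
    omega
  -- apply the divergence lemma
  have hdtt : wordDist S (z 0) (z N') = tr - tl := by
    rw [hz0, hzN]
    exact hΓ tl tr (by omega) htrn
  set f : ℕ → H := fun j => Γ (tl + j) with hf
  have hf0 : f 0 = z 0 := by
    rw [hz0]
    simp [hf]
  have hfn : f (wordDist S (z 0) (z N')) = z N' := by
    rw [hdtt, hzN]
    simp only [hf]
    congr 1
    omega
  have hfg : IsDiscreteGeodesic S f (wordDist S (z 0) (z N')) := by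
    rw [hdtt]
    simp only [hf]
    exact geo_shift hΓ tl (tr - tl) (by omega)
  set k := Nat.log 2 N' + 1 with hk
  have hN'2k : N' ≤ 2 ^ k := le_of_lt (Nat.lt_pow_succ_log_self (by norm_num) N')
  have hidx : t₀ - tl ≤ wordDist S (z 0) (z N') := by
    rw [hdtt]
    omega
  obtain ⟨j, hjN, hjd⟩ := div_lemma hSsym hS hδ hhyp (K + C) k N' hN'2k hN'1 z hzstep
    f hf0 hfn hfg (t₀ - tl) hidx
  have hfi : f (t₀ - tl) = Γ t₀ := by
    simp only [hf]
    congr 1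
    omega
  rw [hfi] at hjd
  have hρk : (ρ : ℝ) ≤ (K + C) + k * δ := by
    have h1 := hzfar j hjN
    have h1' : ρ ≤ wordDist S (z j) (Γ t₀) := by
      rw [wordDist_comm hSsym hS (z j) (Γ t₀)]
      exact h1
    have h2 : (ρ : ℝ) ≤ (wordDist S (z j) (Γ t₀) : ℝ) := by exact_mod_cast h1'
    linarith
  -- bound N' linearly in ρ
  have hdss : (wordDist S (y sl) (y sr) : ℝ) ≤ 8 * ρ := by
    have t1 := wordDist_triangle hS (y sl) (Γ tl) (y sr)
    have t2 := wordDist_triangle hS (Γ tl) (Γ tr) (y sr)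
    have e1 : wordDist S (y sl) (Γ tl) = ll := by
      rw [wordDist_comm hSsym hS, ← hll]
    have e2 : wordDist S (Γ tl) (Γ tr) = tr - tl := hΓ tl tr (by omega) htrn
    have e3 : wordDist S (Γ tr) (y sr) = lr := hlr.symm
    rw [e1] at t1
    rw [e2, e3] at t2
    have hnat : wordDist S (y sl) (y sr) ≤ 8 * ρ := by omega
    exact_mod_cast hnat
  have hKpos : (0 : ℝ) < K := by linarith
  have hL2b : (L2 : ℝ) ≤ K * (8 * ρ + C) := by
    have hcast : ∀ {u v : ℕ}, u ≤ v → ((v - u : ℕ) : ℝ) = (v : ℝ) - u := by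
      intro u v huv
      push_cast [Nat.cast_sub huv]
      ring
    by_cases h : sl ≤ sr
    · have hb := hlo sl sr h hsrm
      have e : (L2 : ℝ) = (sr : ℝ) - sl := by
        rw [hL2, if_pos h]
        exact hcast h
      rw [e]
      rw [div_sub' (ne_of_gt hKpos), div_le_iff₀ hKpos] at hb
      nlinarith
    · push_neg at h
      have hb := hlo sr sl (le_of_lt h) hslm
      have e : (L2 : ℝ) = (sl : ℝ) - sr := by
        rw [hL2, if_neg (by omega)]
        exact hcast (le_of_lt h)
      have hc : (wordDist S (y sr) (y sl) : ℝ) = (wordDist S (y sl) (y sr) : ℝ) := by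
        rw [wd_comm_r hSsym hS]
      rw [e]
      rw [div_sub' (ne_of_gt hKpos), div_le_iff₀ hKpos] at hb
      nlinarith
  have hN'b : (N' : ℝ) ≤ (8 * K + 2) * ρ + K * C := by
    have ecast : (N' : ℝ) = (ll : ℝ) + ((L2 : ℝ) + lr) := by
      rw [hN']
      push_cast
      ring
    have hllr : (ll : ℝ) ≤ ρ := by exact_mod_cast hlρ
    have hlrr : (lr : ℝ) ≤ ρ := by exact_mod_cast hrρ
    rw [ecast]
    have e1 : K * (8 * (ρ:ℝ) + C) = 8 * (K * (ρ:ℝ)) + K * C := by ring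
    have e2 : (8 * K + 2) * (ρ:ℝ) + K * C = 8 * (K * (ρ:ℝ)) + 2 * (ρ:ℝ) + K * C := by ring
    rw [e2]
    rw [e1] at hL2b
    linarith
  -- put everything together
  have hρ0 : (0 : ℝ) ≤ (ρ : ℝ) := Nat.cast_nonneg _
  have hkb : (k : ℝ) ≤ 3 * Real.sqrt N' + 1 := by
    rw [hk]
    push_cast
    have := natlog_le_sqrt N' hN'1
    linarith
  have hsqKC : (0:ℝ) ≤ K * C := by positivity
  have hsq8K : (0:ℝ) ≤ 8 * K + 2 := by linarith
  have hsqb : Real.sqrt N' ≤ Real.sqrt (8 * K + 2) * Real.sqrt ρ + Real.sqrt (K * C) := by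
    have h1 : Real.sqrt N' ≤ Real.sqrt ((8 * K + 2) * ρ + K * C) := Real.sqrt_le_sqrt hN'b
    have h2 : Real.sqrt ((8 * K + 2) * ρ + K * C)
        ≤ Real.sqrt ((8 * K + 2) * ρ) + Real.sqrt (K * C) :=
      sqrt_add_le (by positivity) hsqKC
    have h3 : Real.sqrt ((8 * K + 2) * ρ) = Real.sqrt (8 * K + 2) * Real.sqrt ρ :=
      Real.sqrt_mul hsq8K _
    linarith
  have hsqN0 : 0 ≤ Real.sqrt (N' : ℝ) := Real.sqrt_nonneg _
  have final : (ρ : ℝ) ≤ (K + C + δ + 3 * δ * Real.sqrt (K * C))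
      + (3 * δ * Real.sqrt (8 * K + 2)) * Real.sqrt ρ := by
    have h1 : (k : ℝ) * δ ≤ (3 * Real.sqrt N' + 1) * δ := by
      apply mul_le_mul_of_nonneg_right hkb hδ
    have h2 : Real.sqrt N' * δ ≤ (Real.sqrt (8 * K + 2) * Real.sqrt ρ + Real.sqrt (K * C)) * δ :=
      mul_le_mul_of_nonneg_right hsqb hδ
    nlinarith
  have := sqrt_selfbound hρ0 (by positivity) (by positivity) final
  unfold rho0C
  linarith


end StepB

section StepC

variable {δ : ℝ}

noncomputable def R0C (K C δ : ℝ) : ℝ :=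
  K ^ 2 * (2 * rho0C K C δ + 1 + C) + C + rho0C K C δ

lemma rho0C_le_R0C {K C δ : ℝ} (hK : 1 ≤ K) (hC : 0 ≤ C) (hδ : 0 ≤ δ) :
    rho0C K C δ ≤ R0C K C δ := by
  have h := rho0C_nonneg hK hC hδ
  unfold R0C
  nlinarith

lemma R0C_nonneg {K C δ : ℝ} (hK : 1 ≤ K) (hC : 0 ≤ C) (hδ : 0 ≤ δ) :
    0 ≤ R0C K C δ := le_trans (rho0C_nonneg hK hC hδ) (rho0C_le_R0C hK hC hδ)

set_option maxHeartbeats 2000000 in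
/-- Morse: the Gromov product of the endpoints of a quasi-geodesic chain at any
point of the chain is bounded. -/
lemma chain_gp_bound (hSsym : ∀ s ∈ S, s⁻¹ ∈ S) (hS : Gen S) (hδ : 0 ≤ δ)
    (hhyp : WordHyperbolic S δ) {K C : ℝ} (hK : 1 ≤ K) (hC : 0 ≤ C)
    (y : ℕ → H) (m : ℕ)
    (hup : ∀ j j', j ≤ j' → j' ≤ m → (wordDist S (y j) (y j') : ℝ) ≤ K * ((j' : ℝ) - j) + C)
    (hlo : ∀ j j', j ≤ j' → j' ≤ m → ((j' : ℝ) - j) / K - C ≤ (wordDist S (y j) (y j') : ℝ))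
    (i : ℕ) (him : i ≤ m) :
    gromovProd S (y 0) (y m) (y i) ≤ R0C K C δ := by
  classical
  have hKpos : (0 : ℝ) < K := by linarith
  obtain ⟨Γ, hΓ0, hΓn, hΓ⟩ := exists_geodesic hS (y 0) (y m)
  set n := wordDist S (y 0) (y m) with hn
  have hstep : ∀ j, j < m → (wordDist S (y j) (y (j + 1)) : ℝ) ≤ K + C := by
    intro j hj
    have h1 := hup j (j + 1) (by omega) (by omega)
    have e : ((j + 1 : ℕ) : ℝ) - j = 1 := by push_cast; ring
    rw [e] at h1
    linarith
  have hnear := geodesic_near_chain hSsym hS hδ hhyp hK hC y m hstep hlo hΓ0 hΓn hΓ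
  rw [← hn] at hnear
  set ρ₀ := rho0C K C δ with hρ₀
  have hρ₀0 : 0 ≤ ρ₀ := rho0C_nonneg hK hC hδ
  have hρ₀R : ρ₀ ≤ R0C K C δ := rho0C_le_R0C hK hC hδ
  -- reduction: a bound on the distance to a geodesic point bounds the Gromov product
  have hred : ∀ ν, ν ≤ n → ∀ X : ℝ, (wordDist S (y i) (Γ ν) : ℝ) ≤ X →
      gromovProd S (y 0) (y m) (y i) ≤ X := by
    intro ν hν X hX
    have h1 := gp_add hSsym hS (y 0) (y m) (y i) (Γ ν)
    have h2 : gromovProd S (y 0) (y m) (Γ ν) = 0 := by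
      unfold gromovProd
      have e1 : wordDist S (y 0) (Γ ν) = ν := by
        rw [← hΓ0]
        have := hΓ 0 ν (by omega) hν
        simpa using this
      have e2 : wordDist S (y m) (Γ ν) = n - ν := by
        rw [← hΓn, wordDist_comm hSsym hS]
        exact hΓ ν n hν le_rfl
      have e3 : wordDist S (y 0) (y m) = n := hn.symm
      rw [e1, e2, e3]
      push_cast [Nat.cast_sub hν]
      ring
    rw [h2] at h1
    linarith
  have hd00 : (wordDist S (y 0) (Γ 0) : ℝ) ≤ ρ₀ := by
    rw [← hΓ0, wordDist_self]
    exact_mod_cast hρ₀0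
  have hdmn : (wordDist S (y m) (Γ n) : ℝ) ≤ ρ₀ := by
    rw [← hΓn, wordDist_self]
    exact_mod_cast hρ₀0
  set P1 : ℕ → Prop := fun s => ∃ ν, ν ≤ n ∧ (wordDist S (y s) (Γ ν) : ℝ) ≤ ρ₀ with hP1
  by_cases hni : P1 i
  · obtain ⟨ν, hν, hd⟩ := hni
    exact hred ν hν _ (le_trans hd hρ₀R)
  · -- window
    have hP10 : P1 0 := ⟨0, by omega, hd00⟩
    have hP1m : P1 m := ⟨n, le_rfl, hdmn⟩
    set t₁ := Nat.findGreatest P1 i with ht₁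
    have ht₁P : P1 t₁ := Nat.findGreatest_spec (Nat.zero_le i) hP10
    have ht₁i : t₁ ≤ i := Nat.findGreatest_le i
    have ht₁lt : t₁ < i := by
      rcases eq_or_lt_of_le ht₁i with h | h
      · exact absurd (h ▸ ht₁P) hni
      · exact h
    have hgr : ∀ s, t₁ < s → s ≤ i → ¬P1 s := by
      intro s h1 h2
      exact Nat.findGreatest_is_greatest h1 h2
    have hQex : ∃ s, i ≤ s ∧ s ≤ m ∧ P1 s := ⟨m, him, le_rfl, hP1m⟩
    set t₂ := Nat.find hQex with ht₂
    have ht₂spec : i ≤ t₂ ∧ t₂ ≤ m ∧ P1 t₂ := Nat.find_spec hQex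
    have ht₂min : ∀ s, s < t₂ → ¬(i ≤ s ∧ s ≤ m ∧ P1 s) := fun s hs => Nat.find_min hQex hs
    have hit₂ : i < t₂ := by
      rcases eq_or_lt_of_le ht₂spec.1 with h | h
      · exact absurd (h ▸ ht₂spec.2.2) hni
      · exact h
    -- coverage of the geodesic
    have hcov : ∀ ν, ν ≤ n → (∃ s, s ≤ t₁ ∧ (wordDist S (Γ ν) (y s) : ℝ) ≤ ρ₀) ∨
        (∃ s, t₂ ≤ s ∧ s ≤ m ∧ (wordDist S (Γ ν) (y s) : ℝ) ≤ ρ₀) := by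
      intro ν hν
      obtain ⟨s, hsm, hsd⟩ := hnear ν hν
      have hsd' : (wordDist S (y s) (Γ ν) : ℝ) ≤ ρ₀ := by
        rw [wordDist_comm hSsym hS (y s) (Γ ν)]
        exact hsd
      rcases le_or_gt s t₁ with h | h
      · exact Or.inl ⟨s, h, hsd⟩
      · rcases le_or_gt s i with h2 | h2
        · exact absurd ⟨ν, hν, hsd'⟩ (hgr s h h2)
        · rcases le_or_gt t₂ s with h3 | h3
          · exact Or.inr ⟨s, h3, hsm, hsd⟩
          · exact absurd ⟨by omega, hsm, ⟨ν, hν, hsd'⟩⟩ (ht₂min s h3)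
    set A : ℕ → Prop := fun ν => ∃ s, s ≤ t₁ ∧ (wordDist S (Γ ν) (y s) : ℝ) ≤ ρ₀ with hA
    have hA0 : A 0 := ⟨0, by omega, by
      rw [wordDist_comm hSsym hS]
      exact hd00⟩
    set ν' := Nat.findGreatest A n with hν'
    have hν'A : A ν' := Nat.findGreatest_spec (Nat.zero_le n) hA0
    have hν'n : ν' ≤ n := Nat.findGreatest_le n
    obtain ⟨s₁, hs₁t, hs₁d⟩ := hν'A
    have hs₁i : s₁ ≤ i := by omega
    have hs₁m : s₁ ≤ m := by omega
    have hs₁d' : (wordDist S (y s₁) (Γ ν') : ℝ) ≤ ρ₀ := by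
      rw [wordDist_comm hSsym hS (y s₁) (Γ ν')]
      exact hs₁d
    rcases eq_or_lt_of_le hν'n with heq | hlt
    · -- ν' = n
      have hd : (wordDist S (y s₁) (y m) : ℝ) ≤ ρ₀ := by
        rw [← hΓn, ← heq]
        exact hs₁d'
      have h5 := hlo s₁ m hs₁m le_rfl
      have h6 : (m : ℝ) - s₁ ≤ K * (ρ₀ + C) := by
        have h5' : ((m : ℝ) - s₁) / K ≤ ρ₀ + C := by linarith
        calc (m : ℝ) - s₁ = (((m : ℝ) - s₁) / K) * K := by field_simp
        _ ≤ (ρ₀ + C) * K := by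
            apply mul_le_mul_of_nonneg_right h5' (le_of_lt hKpos)
        _ = K * (ρ₀ + C) := by ring
      have h7 := hup i m him le_rfl
      apply hred n le_rfl
      have e : (wordDist S (y i) (Γ n) : ℝ) = wordDist S (y i) (y m) := by
        rw [hΓn]
      rw [e]
      have h8 : (i : ℝ) ≥ s₁ := by exact_mod_cast hs₁i
      have h9 : K * ((m : ℝ) - i) + C ≤ K * (K * (ρ₀ + C)) + C := by nlinarith
      have h10 : K * (K * (ρ₀ + C)) + C ≤ R0C K C δ := by
        unfold R0C
        rw [← hρ₀]
        nlinarith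
      linarith
    · -- ν' < n
      have hnotA : ¬A (ν' + 1) := by
        intro hA'
        have h2 : ν' + 1 ≤ n := by omega
        have h3 := Nat.le_findGreatest h2 hA'
        rw [← hν'] at h3
        omega
      rcases hcov (ν' + 1) (by omega) with hA' | ⟨s₂, hs₂t, hs₂m, hs₂d⟩
      · exact absurd hA' hnotA
      have hs₂i : i ≤ s₂ := by omega
      have hΓstep : (wordDist S (Γ ν') (Γ (ν' + 1)) : ℝ) ≤ 1 := by
        rw [hΓ ν' (ν' + 1) (by omega) (by omega)]
        norm_num
      have t1 := wd_tri_r hS (y s₁) (Γ ν') (y s₂)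
      have t2 := wd_tri_r hS (Γ ν') (Γ (ν' + 1)) (y s₂)
      have c2 : (wordDist S (Γ (ν' + 1)) (y s₂) : ℝ) ≤ ρ₀ := by exact_mod_cast hs₂d
      have hd12 : (wordDist S (y s₁) (y s₂) : ℝ) ≤ 2 * ρ₀ + 1 := by linarith
      have h5 := hlo s₁ s₂ (by omega) hs₂m
      have h6 : (s₂ : ℝ) - s₁ ≤ K * (2 * ρ₀ + 1 + C) := by
        have h5' : ((s₂ : ℝ) - s₁) / K ≤ 2 * ρ₀ + 1 + C := by linarith
        calc (s₂ : ℝ) - s₁ = (((s₂ : ℝ) - s₁) / K) * K := by field_simp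
        _ ≤ (2 * ρ₀ + 1 + C) * K := by
            apply mul_le_mul_of_nonneg_right h5' (le_of_lt hKpos)
        _ = K * (2 * ρ₀ + 1 + C) := by ring
      have h7 := hup s₁ i hs₁i him
      apply hred ν' (by omega)
      have t3 := wd_tri_r hS (y i) (y s₁) (Γ ν')
      have c3 : (wordDist S (y i) (y s₁) : ℝ) = wordDist S (y s₁) (y i) :=
        wd_comm_r hSsym hS _ _
      have h8 : (i : ℝ) ≤ s₂ := by exact_mod_cast hs₂i
      have h9 : (s₁ : ℝ) ≤ i := by exact_mod_cast hs₁i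
      have h11 : K * ((i : ℝ) - s₁) + C ≤ K * (K * (2 * ρ₀ + 1 + C)) + C := by nlinarith
      have h12 : K * (K * (2 * ρ₀ + 1 + C)) + C + ρ₀ = R0C K C δ := by
        unfold R0C
        rw [← hρ₀]
        ring
      linarith

end StepC

section Assembly

variable {δ : ℝ}

lemma gp_inv_val (hSsym : ∀ s ∈ S, s⁻¹ ∈ S) (hS : Gen S) (a : H) :
    gromovProd S a⁻¹ a 1 =
      ((wordLength S a : ℝ) + wordLength S a - wordLength S (a * a)) / 2 := by
  unfold gromovProd
  have e1 : wordDist S a⁻¹ 1 = wordLength S a := by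
    unfold wordDist
    congr 1
    group
  have e2 : wordDist S a 1 = wordLength S a := by
    unfold wordDist
    rw [mul_one]
    exact wordLength_inv hSsym hS a
  have e3 : wordDist S a⁻¹ a = wordLength S (a * a) := by
    unfold wordDist
    congr 1
    group
  rw [e1, e2, e3]

end Assembly

end Stmt9

set_option maxHeartbeats 1000000 in
/-- Let `H` be a group with finite symmetric generating set `S` whose
word metric is `δ`-hyperbolic, let `K ≥ 1`, `C ≥ 0`, and `κ ≥ 0`. There exists
`κ' ≥ 0`, depending only on `K`, `C`, `κ`, `H`, `S`, `δ`, such that for every group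
automorphism `ψ : H → H` which is a `(K,C)`-quasi-isometry of the word metric and every
`κ`-almost conjugacy minimal `h ∈ H`, the image `ψ h` is `κ'`-almost conjugacy minimal. -/
theorem stmt9 {H : Type*} [Group H] (S : Set H) (δ : ℝ)
    (hSfin : S.Finite) (hSsym : ∀ s ∈ S, s⁻¹ ∈ S) (hSgen : Subgroup.closure S = ⊤)
    (hδ : 0 ≤ δ) (hhyp : WordHyperbolic S δ)
    (K C κ : ℝ) (hK : 1 ≤ K) (hC : 0 ≤ C) (hκ : 0 ≤ κ) :
    ∃ κ' : ℝ, 0 ≤ κ' ∧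
      ∀ ψ : H ≃* H,
        (∀ a b : H,
          (1 / K) * (wordDist S a b : ℝ) - C ≤ (wordDist S (ψ a) (ψ b) : ℝ) ∧
          (wordDist S (ψ a) (ψ b) : ℝ) ≤ K * (wordDist S a b : ℝ) + C) →
        ∀ h : H, AlmostConjMin S κ h → AlmostConjMin S κ' (ψ h) := by
  have hS : Stmt9.Gen S := Stmt9.gen_of_closure hSsym hSgen
  have hKpos : (0 : ℝ) < K := by linarith
  have hR0 : 0 ≤ Stmt9.R0C K C δ := Stmt9.R0C_nonneg hK hC hδ
  refine ⟨2 * (K * (2 * δ + κ + 3) + C + Stmt9.R0C K C δ) + 2 * δ + 2, by nlinarith, ?_⟩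
  intro ψ hψ h hacm
  intro g
  set a := ψ h with ha
  -- Step 1: the Gromov product (h, h⁻¹)_1 is small
  have hgp_h : 2 * (wordLength S h : ℝ) - wordLength S (h * h) ≤ 2 * (δ + κ + 2) :=
    Stmt9.acm_gp hSsym hS hδ hhyp hκ hacm
  -- Step 2: a point on a geodesic [h⁻¹, h] near 1
  obtain ⟨σg, hσ0, hσn, hσ⟩ := Stmt9.exists_geodesic hS h⁻¹ h
  set m := wordDist S h⁻¹ h with hm
  obtain ⟨i₀, hi₀m, hi₀d⟩ :=
    Stmt9.near_geodesic hSsym hS hδ hhyp h⁻¹ h 1 hσ0 hσn hσ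
  have hgpval := Stmt9.gp_inv_val hSsym hS h
  have hd1 : (wordDist S 1 (σg i₀) : ℝ) ≤ 2 * δ + κ + 3 := by
    rw [hgpval] at hi₀d
    linarith
  -- Step 3: the image chain
  set y : ℕ → H := fun j => ψ (σg j) with hy
  have hup : ∀ j j', j ≤ j' → j' ≤ m → (wordDist S (y j) (y j') : ℝ) ≤ K * ((j' : ℝ) - j) + C := by
    intro j j' hjj hj'
    have h1 := (hψ (σg j) (σg j')).2
    have hdσ : wordDist S (σg j) (σg j') = j' - j := hσ j j' hjj hj'
    rw [hdσ] at h1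
    have e : ((j' - j : ℕ) : ℝ) = (j' : ℝ) - j := by
      push_cast [Nat.cast_sub hjj]
      ring
    rw [e] at h1
    exact h1
  have hlo : ∀ j j', j ≤ j' → j' ≤ m → ((j' : ℝ) - j) / K - C ≤ (wordDist S (y j) (y j') : ℝ) := by
    intro j j' hjj hj'
    have h1 := (hψ (σg j) (σg j')).1
    have hdσ : wordDist S (σg j) (σg j') = j' - j := hσ j j' hjj hj'
    rw [hdσ] at h1
    have e : ((j' - j : ℕ) : ℝ) = (j' : ℝ) - j := by
      push_cast [Nat.cast_sub hjj]
      ring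
    rw [e] at h1
    have e2 : (1 / K) * ((j' : ℝ) - j) = ((j' : ℝ) - j) / K := by ring
    rw [e2] at h1
    exact h1
  have hgpb := Stmt9.chain_gp_bound hSsym hS hδ hhyp hK hC y m hup hlo i₀ hi₀m
  have hy0 : y 0 = a⁻¹ := by
    simp only [hy, hσ0, ha]
    exact map_inv ψ h
  have hym : y m = a := by
    simp only [hy, hσn, ha]
  rw [hy0, hym] at hgpb
  have hgpa := Stmt9.gp_add hSsym hS a⁻¹ a 1 (y i₀)
  have hd2 : (wordDist S 1 (y i₀) : ℝ) ≤ K * (2 * δ + κ + 3) + C := by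
    have h1 := (hψ 1 (σg i₀)).2
    rw [map_one] at h1
    have h2 : K * (wordDist S 1 (σg i₀) : ℝ) ≤ K * (2 * δ + κ + 3) :=
      mul_le_mul_of_nonneg_left hd1 (le_of_lt hKpos)
    simp only [hy]
    linarith
  have hgpaval := Stmt9.gp_inv_val hSsym hS a
  have hkey : 2 * (wordLength S a : ℝ) - wordLength S (a * a)
      ≤ 2 * (K * (2 * δ + κ + 3) + C + Stmt9.R0C K C δ) := by
    rw [hgpaval] at hgpa
    linarith
  have hcl := Stmt9.conj_lower hSsym hS hδ hhyp a g
  linarith
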